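/- Improved lower bound on the sum of AdaBB stepsizes: with the initial ratio θ_0 chosen adaptively, the stepsizes generated by the general AdaBB iteration satisfy Σ_{i=1}^k α_i ≥ (k − 2 + √2)/L for every k ≥ 1. -/

import Mathlib

open scoped RealInnerProductSpace
open Finset Filter

noncomputable section

/-- The general AdaBB iteration (Algorithm 2 of the paper) for a convex differentiable
function `f : ℝⁿ → ℝ` that attains its minimum.  `f'` is the gradient of `f`,
`x` the iterates, `α` the stepsizes, `θ` the stepsize ratios and `lam` the short BB stepsizes. -/
structure AdaBB (n : ℕ) where
  f : EuclideanSpace ℝ (Fin n) → ℝ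
  f' : EuclideanSpace ℝ (Fin n) → EuclideanSpace ℝ (Fin n)
  x : ℕ → EuclideanSpace ℝ (Fin n)
  α : ℕ → ℝ
  θ : ℕ → ℝ
  lam : ℕ → ℝ
  hconv : ConvexOn ℝ Set.univ f
  hgrad : ∀ y, HasGradientAt f (f' y) y
  hmin : ∃ z, ∀ y, f z ≤ f y
  hα0 : 0 < α 0
  hθ0 : 0 ≤ θ 0
  hx1 : x 1 = x 0 - α 0 • f' (x 0)
  hne : ∀ k, f' (x (k + 1)) ≠ f' (x k)
  hlam : ∀ k, lam (k + 1) =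
    ⟪f' (x (k + 1)) - f' (x k), x (k + 1) - x k⟫ / ‖f' (x (k + 1)) - f' (x k)‖ ^ 2
  hlampos : ∀ k, 0 < lam (k + 1)
  hcase1 : ∀ k, α k ≤ lam (k + 1) →
    α (k + 1) = Real.sqrt (1 + θ k) * α k ∧ θ (k + 1) = α (k + 1) / α k
  hcase2 : ∀ k, α k / 2 < lam (k + 1) → lam (k + 1) < α k →
    (α (k + 1) = min (Real.sqrt (lam (k + 1) / (2 * (α k - lam (k + 1)))))
        (Real.sqrt ((1 + θ k) * lam (k + 1) / (2 * lam (k + 1) - α k))) * α k ∨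
      α (k + 1) = lam (k + 1)) ∧
    θ (k + 1) = 2 * α (k + 1) / α k - α (k + 1) / lam (k + 1)
  hcase3 : ∀ k, lam (k + 1) ≤ α k / 2 →
    (α (k + 1) = Real.sqrt (α k / (2 * (α k - lam (k + 1)))) * lam (k + 1) ∨
      α (k + 1) = lam (k + 1) / Real.sqrt 2) ∧
    θ (k + 1) = α (k + 1) / α k
  hstep : ∀ k, x (k + 2) = x (k + 1) - α (k + 1) • f' (x (k + 1))

namespace AdaBB

variable {n : ℕ}

/-- `M_k` (for `k ≥ 1`). -/
def M (S : AdaBB n) (k : ℕ) : ℝ :=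
  if S.α (k - 1) ≤ S.lam k then 0
  else if S.α (k - 1) / 2 < S.lam k then
    S.α k ^ 2 / (S.lam k * S.α (k - 1)) - S.α k ^ 2 / S.α (k - 1) ^ 2
  else S.α k ^ 2 / S.lam k ^ 2 - S.α k ^ 2 / (S.α (k - 1) * S.lam k)

/-- `P_k` for `k ≥ 1`. -/
def Paux (S : AdaBB n) (k : ℕ) : ℝ :=
  if S.α (k - 1) ≤ S.lam k then S.α k ^ 2 / S.α (k - 1)
  else if S.α (k - 1) / 2 < S.lam k then
    2 * S.α k ^ 2 / S.α (k - 1) - S.α k ^ 2 / S.lam k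
  else S.α k ^ 2 / S.α (k - 1)

/-- `P_k`, with the convention `P_0 = P_1 - α_0`. -/
def P (S : AdaBB n) (k : ℕ) : ℝ :=
  if k = 0 then S.Paux 1 - S.α 0 else S.Paux k

/-- `w_k = α_k + P_k - P_{k+1}`. -/
def w (S : AdaBB n) (k : ℕ) : ℝ := S.α k + S.P k - S.P (k + 1)

/-- The Lyapunov function `Υ_k` (for `k ≥ 1`), relative to a minimizer `xs` of `f`. -/
def Upsilon (S : AdaBB n) (xs : EuclideanSpace ℝ (Fin n)) (k : ℕ) : ℝ :=
  ‖S.x k - xs‖ ^ 2 + 2 * S.M k * ‖S.x k - S.x (k - 1)‖ ^ 2 +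
    (2 * S.α (k - 1) + 2 * S.P (k - 1)) * (S.f (S.x (k - 1)) - S.f xs)

lemma step_eq (S : AdaBB n) : ∀ k, S.x (k+1) = S.x k - S.α k • S.f' (S.x k)
  | 0 => S.hx1
  | (k+1) => S.hstep k

lemma grad_ineq (S : AdaBB n) (x y : EuclideanSpace ℝ (Fin n)) :
    S.f x + ⟪S.f' x, y - x⟫ ≤ S.f y := by
  set v := y - x with hv
  have h1 : HasDerivAt (fun t : ℝ => x + t • v) v 0 := by
    simpa using ((hasDerivAt_id (0:ℝ)).smul_const v).const_add x
  have h2 := (S.hgrad x).hasFDerivAt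
  have h2' : HasFDerivAt S.f (InnerProductSpace.toDual ℝ _ (S.f' x))
      ((fun t : ℝ => x + t • v) 0) := by simpa using h2
  have hg : HasDerivAt (fun t : ℝ => S.f (x + t • v)) ⟪S.f' x, v⟫ 0 := by
    exact (h2'.comp_hasDerivAt 0 h1).congr_deriv (by simp)
  have hconv : ConvexOn ℝ Set.univ (fun t : ℝ => S.f (x + t • v)) := by
    have := S.hconv.comp_affineMap (AffineMap.lineMap x y : ℝ →ᵃ[ℝ] _)
    have heq : (S.f ∘ (AffineMap.lineMap x y : ℝ →ᵃ[ℝ] _)) = fun t : ℝ => S.f (x + t • v) := by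
      funext t
      simp [AffineMap.lineMap_apply, hv, add_comm]
    rw [heq] at this
    simpa using this
  have := hconv.le_slope_of_hasDerivAt (Set.mem_univ (0:ℝ)) (Set.mem_univ (1:ℝ)) one_pos hg
  rw [slope_def_field] at this
  simp only [one_smul, zero_smul, add_zero] at this
  have h3 : x + v = y := by rw [hv]; abel
  simp only [one_smul, zero_smul, add_zero, h3, sub_zero, div_one] at this
  linarith

lemma pos_all (S : AdaBB n) : ∀ k, 0 < S.α k ∧ 0 ≤ S.θ k := by
  intro k
  induction k with
  | zero => exact ⟨S.hα0, S.hθ0⟩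
  | succ k ih =>
    obtain ⟨ha, hθ⟩ := ih
    have hlm := S.hlampos k
    rcases le_or_gt (S.α k) (S.lam (k+1)) with h1 | h1
    · obtain ⟨e1, e2⟩ := S.hcase1 k h1
      have hs : (1:ℝ) ≤ Real.sqrt (1 + S.θ k) :=
        Real.le_sqrt_of_sq_le (by nlinarith)
      have ha2 : 0 < S.α (k+1) := by rw [e1]; nlinarith
      exact ⟨ha2, by rw [e2]; positivity⟩
    · rcases le_or_gt (S.lam (k+1)) (S.α k / 2) with h2 | h2
      · obtain ⟨e1, e2⟩ := S.hcase3 k h2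
        have ha2 : 0 < S.α (k+1) := by
          rcases e1 with e1 | e1 <;> rw [e1]
          · have : 0 < Real.sqrt (S.α k / (2 * (S.α k - S.lam (k+1)))) := by
              apply Real.sqrt_pos.mpr; apply div_pos ha; nlinarith
            nlinarith
          · positivity
        exact ⟨ha2, by rw [e2]; positivity⟩
      · obtain ⟨e1, e2⟩ := S.hcase2 k h2 h1
        have ha2 : 0 < S.α (k+1) := by
          rcases e1 with e1 | e1 <;> rw [e1]
          · have p1 : 0 < Real.sqrt (S.lam (k+1) / (2 * (S.α k - S.lam (k+1)))) := by
              apply Real.sqrt_pos.mpr; apply div_pos hlm; nlinarith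
            have p2 : 0 < Real.sqrt ((1 + S.θ k) * S.lam (k+1) / (2 * S.lam (k+1) - S.α k)) := by
              apply Real.sqrt_pos.mpr; apply div_pos (by nlinarith) (by nlinarith)
            have := lt_min p1 p2
            nlinarith
          · exact hlm
        refine ⟨ha2, ?_⟩
        rw [e2]
        rw [div_sub_div _ _ (ne_of_gt ha) (ne_of_gt hlm)]
        apply div_nonneg _ (by positivity)
        nlinarith
    
lemma alpha_pos (S : AdaBB n) (k : ℕ) : 0 < S.α k := (S.pos_all k).1
lemma theta_nonneg (S : AdaBB n) (k : ℕ) : 0 ≤ S.θ k := (S.pos_all k).2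


section CaseLemmas
variable (S : AdaBB n) (k : ℕ)

lemma one_le_sqrt_one_add {t : ℝ} (ht : 0 ≤ t) : 1 ≤ Real.sqrt (1 + t) :=
  Real.le_sqrt_of_sq_le (by nlinarith)

lemma case1_data (h : S.α k ≤ S.lam (k+1)) :
    S.α (k+1) = Real.sqrt (1 + S.θ k) * S.α k ∧ S.θ (k+1) = Real.sqrt (1 + S.θ k) := by
  obtain ⟨e1, e2⟩ := S.hcase1 k h
  refine ⟨e1, ?_⟩
  rw [e2, e1, mul_div_assoc, div_self (ne_of_gt (S.alpha_pos k)), mul_one]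

lemma case2_lower (h1 : S.α k / 2 < S.lam (k+1)) (h2 : S.lam (k+1) < S.α k) :
    S.lam (k+1) ≤ S.α (k+1) := by
  obtain ⟨e1, _⟩ := S.hcase2 k h1 h2
  have ha := S.alpha_pos k
  have hl := S.hlampos k
  rcases e1 with e1 | e1
  · rw [e1]
    have hb1 : S.lam (k+1) / S.α k ≤ Real.sqrt (S.lam (k+1) / (2 * (S.α k - S.lam (k+1)))) := by
      apply Real.le_sqrt_of_sq_le
      rw [div_pow, div_le_div_iff₀ (by positivity) (by nlinarith)]
      nlinarith [sq_nonneg (S.α k - S.lam (k+1))]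
    have hb2 : S.lam (k+1) / S.α k ≤
        Real.sqrt ((1 + S.θ k) * S.lam (k+1) / (2 * S.lam (k+1) - S.α k)) := by
      apply Real.le_sqrt_of_sq_le
      rw [div_pow, div_le_div_iff₀ (by positivity) (by nlinarith)]
      nlinarith [mul_nonneg (mul_nonneg hl.le hl.le) (sub_pos.2 h2).le,
        mul_nonneg hl.le (sq_nonneg (S.α k - S.lam (k+1))),
        mul_nonneg (S.theta_nonneg k) (mul_nonneg hl.le (sq_nonneg (S.α k)))]
    have := le_min hb1 hb2
    rw [div_le_iff₀ ha] at this
    linarith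
  · rw [e1]

lemma case2_sq1 (h1 : S.α k / 2 < S.lam (k+1)) (h2 : S.lam (k+1) < S.α k) :
    S.α (k+1) ^ 2 * (2 * (S.α k - S.lam (k+1))) ≤ S.lam (k+1) * S.α k ^ 2 := by
  obtain ⟨e1, _⟩ := S.hcase2 k h1 h2
  have ha := S.alpha_pos k
  have hl := S.hlampos k
  have hD : 0 < 2 * (S.α k - S.lam (k+1)) := by nlinarith
  rcases e1 with e1 | e1
  · have hb : S.α (k+1) ≤ Real.sqrt (S.lam (k+1) / (2 * (S.α k - S.lam (k+1)))) * S.α k := by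
      rw [e1]
      exact mul_le_mul_of_nonneg_right (min_le_left _ _) ha.le
    have hb0 : 0 ≤ S.α (k+1) := (S.alpha_pos (k+1)).le
    have h3 : S.α (k+1) ^ 2 ≤ S.lam (k+1) / (2 * (S.α k - S.lam (k+1))) * S.α k ^ 2 := by
      calc S.α (k+1) ^ 2 ≤ (Real.sqrt (S.lam (k+1) / (2 * (S.α k - S.lam (k+1)))) * S.α k) ^ 2 :=
            pow_le_pow_left₀ hb0 hb 2
        _ = S.lam (k+1) / (2 * (S.α k - S.lam (k+1))) * S.α k ^ 2 := by
            rw [mul_pow, Real.sq_sqrt (le_of_lt (div_pos hl hD))]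
    rw [div_mul_eq_mul_div, le_div_iff₀ hD] at h3
    linarith
  · rw [e1]
    nlinarith [sq_nonneg (S.α k - S.lam (k+1))]

lemma case2_sq2 (h1 : S.α k / 2 < S.lam (k+1)) (h2 : S.lam (k+1) < S.α k) :
    S.α (k+1) ^ 2 * (2 * S.lam (k+1) - S.α k) ≤ (1 + S.θ k) * S.lam (k+1) * S.α k ^ 2 := by
  obtain ⟨e1, _⟩ := S.hcase2 k h1 h2
  have ha := S.alpha_pos k
  have hl := S.hlampos k
  have ht := S.theta_nonneg k
  have hD : 0 < 2 * S.lam (k+1) - S.α k := by nlinarith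
  rcases e1 with e1 | e1
  · have hb : S.α (k+1) ≤
        Real.sqrt ((1 + S.θ k) * S.lam (k+1) / (2 * S.lam (k+1) - S.α k)) * S.α k := by
      rw [e1]
      exact mul_le_mul_of_nonneg_right (min_le_right _ _) ha.le
    have hb0 : 0 ≤ S.α (k+1) := (S.alpha_pos (k+1)).le
    have h3 : S.α (k+1) ^ 2 ≤
        (1 + S.θ k) * S.lam (k+1) / (2 * S.lam (k+1) - S.α k) * S.α k ^ 2 := by
      calc S.α (k+1) ^ 2
          ≤ (Real.sqrt ((1 + S.θ k) * S.lam (k+1) / (2 * S.lam (k+1) - S.α k)) * S.α k) ^ 2 :=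
            pow_le_pow_left₀ hb0 hb 2
        _ = (1 + S.θ k) * S.lam (k+1) / (2 * S.lam (k+1) - S.α k) * S.α k ^ 2 := by
            rw [mul_pow, Real.sq_sqrt]
            positivity
    rw [div_mul_eq_mul_div, le_div_iff₀ hD] at h3
    linarith
  · rw [e1]
    nlinarith [mul_nonneg (mul_nonneg hl.le hl.le) (sub_pos.2 h2).le,
        mul_nonneg hl.le (sq_nonneg (S.α k - S.lam (k+1))),
        mul_nonneg (S.theta_nonneg k) (mul_nonneg hl.le (sq_nonneg (S.α k)))]

lemma case3_lower (h : S.lam (k+1) ≤ S.α k / 2) :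
    S.lam (k+1) ≤ Real.sqrt 2 * S.α (k+1) := by
  obtain ⟨e1, _⟩ := S.hcase3 k h
  have ha := S.alpha_pos k
  have hl := S.hlampos k
  have hs2 : Real.sqrt 2 * Real.sqrt 2 = 2 := Real.mul_self_sqrt (by norm_num)
  have hs2pos : 0 < Real.sqrt 2 := Real.sqrt_pos.mpr (by norm_num)
  rcases e1 with e1 | e1
  · rw [e1]
    have : (1:ℝ) / Real.sqrt 2 ≤ Real.sqrt (S.α k / (2 * (S.α k - S.lam (k+1)))) := by
      apply Real.le_sqrt_of_sq_le
      rw [div_pow, div_le_div_iff₀ (by nlinarith) (by nlinarith)]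
      nlinarith
    have h2 : 1 / Real.sqrt 2 * S.lam (k+1) ≤
        Real.sqrt (S.α k / (2 * (S.α k - S.lam (k+1)))) * S.lam (k+1) :=
      mul_le_mul_of_nonneg_right this hl.le
    calc S.lam (k+1) = Real.sqrt 2 * (1 / Real.sqrt 2 * S.lam (k+1)) := by
          field_simp
      _ ≤ Real.sqrt 2 * (Real.sqrt (S.α k / (2 * (S.α k - S.lam (k+1)))) * S.lam (k+1)) :=
          mul_le_mul_of_nonneg_left h2 hs2pos.le
  · rw [e1]
    rw [mul_div_cancel₀ _ (ne_of_gt hs2pos)]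

lemma case3_upper (h : S.lam (k+1) ≤ S.α k / 2) : S.α (k+1) ≤ S.lam (k+1) := by
  obtain ⟨e1, _⟩ := S.hcase3 k h
  have ha := S.alpha_pos k
  have hl := S.hlampos k
  have hs2 : (1:ℝ) ≤ Real.sqrt 2 := Real.le_sqrt_of_sq_le (by norm_num)
  rcases e1 with e1 | e1
  · rw [e1]
    have h1 : Real.sqrt (S.α k / (2 * (S.α k - S.lam (k+1)))) ≤ 1 := by
      rw [show (1:ℝ) = Real.sqrt 1 by simp]
      apply Real.sqrt_le_sqrt
      rw [div_le_one (by nlinarith)]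
      nlinarith
    nlinarith
  · rw [e1, div_le_iff₀ (by positivity : (0:ℝ) < Real.sqrt 2)]
    nlinarith

lemma case3_sq (h : S.lam (k+1) ≤ S.α k / 2) :
    S.α (k+1) ^ 2 * (2 * (S.α k - S.lam (k+1))) ≤ S.α k * S.lam (k+1) ^ 2 := by
  obtain ⟨e1, _⟩ := S.hcase3 k h
  have ha := S.alpha_pos k
  have hl := S.hlampos k
  have hD : 0 < 2 * (S.α k - S.lam (k+1)) := by nlinarith
  rcases e1 with e1 | e1
  · rw [e1, mul_pow, Real.sq_sqrt (le_of_lt (div_pos ha hD))]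
    apply le_of_eq
    field_simp
    exact div_self (ne_of_gt (by linarith))
  · rw [e1, div_pow, Real.sq_sqrt (by norm_num : (0:ℝ) ≤ 2)]
    rw [div_mul_eq_mul_div, div_le_iff₀ (by norm_num : (0:ℝ) < 2)]
    nlinarith [sq_nonneg (S.lam (k+1))]

end CaseLemmas


section MP
variable (S : AdaBB n) (k : ℕ)

lemma P_succ : S.P (k+1) = S.Paux (k+1) := if_neg (Nat.succ_ne_zero k)

lemma M_succ1 (h : S.α k ≤ S.lam (k+1)) : S.M (k+1) = 0 := by
  simp only [M, Nat.add_sub_cancel, if_pos h]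

lemma M_succ2 (h1 : S.α k / 2 < S.lam (k+1)) (h2 : S.lam (k+1) < S.α k) :
    S.M (k+1) = S.α (k+1) ^ 2 / (S.lam (k+1) * S.α k) - S.α (k+1) ^ 2 / S.α k ^ 2 := by
  simp only [M, Nat.add_sub_cancel, if_neg (not_le.mpr h2), if_pos h1]

lemma M_succ3 (h : S.lam (k+1) ≤ S.α k / 2) :
    S.M (k+1) = S.α (k+1) ^ 2 / S.lam (k+1) ^ 2 - S.α (k+1) ^ 2 / (S.α k * S.lam (k+1)) := by
  have ha := S.alpha_pos k
  have h2 : ¬ (S.α k ≤ S.lam (k+1)) := by push_neg; nlinarith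
  simp only [M, Nat.add_sub_cancel, if_neg h2, if_neg (not_lt.mpr h)]

lemma Paux_succ1 (h : S.α k ≤ S.lam (k+1)) : S.Paux (k+1) = S.α (k+1) ^ 2 / S.α k := by
  simp only [Paux, Nat.add_sub_cancel, if_pos h]

lemma Paux_succ2 (h1 : S.α k / 2 < S.lam (k+1)) (h2 : S.lam (k+1) < S.α k) :
    S.Paux (k+1) = 2 * S.α (k+1) ^ 2 / S.α k - S.α (k+1) ^ 2 / S.lam (k+1) := by
  simp only [Paux, Nat.add_sub_cancel, if_neg (not_le.mpr h2), if_pos h1]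

lemma Paux_succ3 (h : S.lam (k+1) ≤ S.α k / 2) : S.Paux (k+1) = S.α (k+1) ^ 2 / S.α k := by
  have ha := S.alpha_pos k
  have h2 : ¬ (S.α k ≤ S.lam (k+1)) := by push_neg; nlinarith
  simp only [Paux, Nat.add_sub_cancel, if_neg h2, if_neg (not_lt.mpr h)]

lemma M_succ_nonneg : 0 ≤ S.M (k+1) := by
  have ha := S.alpha_pos k
  have hl := S.hlampos k
  have hb := S.alpha_pos (k+1)
  rcases le_or_gt (S.α k) (S.lam (k+1)) with h | h
  · rw [S.M_succ1 k h]
  rcases le_or_gt (S.lam (k+1)) (S.α k / 2) with h2 | h2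
  · rw [S.M_succ3 k h2]
    have e : S.α (k+1) ^ 2 / S.lam (k+1) ^ 2 - S.α (k+1) ^ 2 / (S.α k * S.lam (k+1)) =
        S.α (k+1) ^ 2 * (S.α k - S.lam (k+1)) / (S.α k * S.lam (k+1) ^ 2) := by
      field_simp
    rw [e]
    apply div_nonneg _ (by positivity)
    nlinarith [sq_nonneg (S.α (k+1))]
  · rw [S.M_succ2 k h2 h]
    have e : S.α (k+1) ^ 2 / (S.lam (k+1) * S.α k) - S.α (k+1) ^ 2 / S.α k ^ 2 =
        S.α (k+1) ^ 2 * (S.α k - S.lam (k+1)) / (S.lam (k+1) * S.α k ^ 2) := by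
      field_simp
    rw [e]
    apply div_nonneg _ (by positivity)
    nlinarith [sq_nonneg (S.α (k+1))]

lemma M_succ_le_half : S.M (k+1) ≤ 1 / 2 := by
  have ha := S.alpha_pos k
  have hl := S.hlampos k
  have hb := S.alpha_pos (k+1)
  rcases le_or_gt (S.α k) (S.lam (k+1)) with h | h
  · rw [S.M_succ1 k h]; norm_num
  rcases le_or_gt (S.lam (k+1)) (S.α k / 2) with h2 | h2
  · rw [S.M_succ3 k h2]
    have key := S.case3_sq k h2
    rw [div_sub_div _ _ (by positivity) (by positivity), div_le_iff₀ (by positivity)]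
    nlinarith [sq_nonneg (S.lam (k+1)), sq_nonneg (S.α (k+1))]
  · rw [S.M_succ2 k h2 h]
    have key := S.case2_sq1 k h2 h
    rw [div_sub_div _ _ (by positivity) (by positivity), div_le_iff₀ (by positivity)]
    nlinarith [sq_nonneg (S.lam (k+1)), sq_nonneg (S.α (k+1))]

lemma P_succ_nonneg : 0 ≤ S.P (k+1) := by
  have ha := S.alpha_pos k
  have hl := S.hlampos k
  have hb := S.alpha_pos (k+1)
  rw [S.P_succ k]
  rcases le_or_gt (S.α k) (S.lam (k+1)) with h | h
  · rw [S.Paux_succ1 k h]; positivity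
  rcases le_or_gt (S.lam (k+1)) (S.α k / 2) with h2 | h2
  · rw [S.Paux_succ3 k h2]; positivity
  · rw [S.Paux_succ2 k h2 h]
    have e : 2 * S.α (k+1) ^ 2 / S.α k - S.α (k+1) ^ 2 / S.lam (k+1) =
        S.α (k+1) ^ 2 * (2 * S.lam (k+1) - S.α k) / (S.α k * S.lam (k+1)) := by
      field_simp
    rw [e]
    apply div_nonneg _ (by positivity)
    nlinarith [sq_nonneg (S.α (k+1))]

lemma P_succ_eq_theta : S.P (k+1) = S.α (k+1) * S.θ (k+1) := by
  have ha := S.alpha_pos k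
  have hl := S.hlampos k
  rw [S.P_succ k]
  rcases le_or_gt (S.α k) (S.lam (k+1)) with h | h
  · rw [S.Paux_succ1 k h, (S.hcase1 k h).2]
    field_simp
  rcases le_or_gt (S.lam (k+1)) (S.α k / 2) with h2 | h2
  · rw [S.Paux_succ3 k h2, (S.hcase3 k h2).2]
    field_simp
  · rw [S.Paux_succ2 k h2 h, (S.hcase2 k h2 h).2]
    field_simp

lemma w_nonneg : S.P (k+1) ≤ S.α k + S.P k := by
  have ha := S.alpha_pos k
  have hl := S.hlampos k
  have hb := S.alpha_pos (k+1)
  cases k with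
  | zero =>
    have : S.P 0 = S.Paux 1 - S.α 0 := if_pos rfl
    rw [this, S.P_succ 0]
    linarith
  | succ j =>
    have hPk : S.P (j+1) = S.α (j+1) * S.θ (j+1) := S.P_succ_eq_theta j
    set k := j + 1
    have ht := S.theta_nonneg k
    rw [hPk, S.P_succ k]
    rcases le_or_gt (S.α k) (S.lam (k+1)) with h | h
    · rw [S.Paux_succ1 k h]
      obtain ⟨e1, _⟩ := S.case1_data k h
      rw [e1, mul_pow, Real.sq_sqrt (by linarith : (0:ℝ) ≤ 1 + S.θ k)]
      rw [div_le_iff₀ ha]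
      ring_nf
      nlinarith [sq_nonneg (S.α k)]
    rcases le_or_gt (S.lam (k+1)) (S.α k / 2) with h2 | h2
    · rw [S.Paux_succ3 k h2]
      have hu := S.case3_upper k h2
      rw [div_le_iff₀ ha]
      nlinarith [mul_nonneg ht (mul_pos ha ha).le,
        mul_le_mul hu hu hb.le hl.le]
    · rw [S.Paux_succ2 k h2 h]
      have key := S.case2_sq2 k h2 h
      have e : 2 * S.α (k+1) ^ 2 / S.α k - S.α (k+1) ^ 2 / S.lam (k+1) =
          S.α (k+1) ^ 2 * (2 * S.lam (k+1) - S.α k) / (S.α k * S.lam (k+1)) := by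
        field_simp
      rw [e, div_le_iff₀ (by positivity)]
      nlinarith [mul_nonneg ht hl.le]

end MP


lemma keyD {a l F M1 Pp H E : ℝ} (ha : 0 < a) (hl : 0 < l) (hH : 0 ≤ H) (hE : 0 ≤ E)
    (hCS : l^2*E ≤ a^2*H)
    (hA : F ≤ 2*M1*a^2 + 2*a*Pp)
    (hB : F*(a-l)^2 ≤ 2*M1*a^2*l^2 + 2*a*Pp*l^2 - 2*a^2*Pp*l) :
    F*(H + E - 2*l*E/a) + 2*l*Pp*E ≤ 2*M1*a^2*H + 2*a*Pp*H := by
  have key : a*(F - 2*M1*a^2 - 2*a*Pp)*H + (F*(a-2*l) + 2*l*Pp*a)*E ≤ 0 := by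
    have h2 : (F - 2*M1*a^2 - 2*a*Pp)*l^2 + (F*(a-2*l) + 2*l*Pp*a)*a ≤ 0 := by nlinarith [hB]
    rcases le_or_gt (F*(a-2*l) + 2*l*Pp*a) 0 with hc | hc
    · have t1 : a*(F - 2*M1*a^2 - 2*a*Pp)*H ≤ 0 := by
        rw [mul_assoc]
        apply mul_nonpos_of_nonneg_of_nonpos ha.le
        exact mul_nonpos_of_nonpos_of_nonneg (by linarith) hH
      have t2 : (F*(a-2*l) + 2*l*Pp*a)*E ≤ 0 := mul_nonpos_of_nonpos_of_nonneg hc hE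
      linarith
    · have h1 : (F*(a-2*l) + 2*l*Pp*a)*(l^2*E) ≤ (F*(a-2*l) + 2*l*Pp*a)*(a^2*H) :=
        mul_le_mul_of_nonneg_left hCS hc.le
      have h3 : ((F - 2*M1*a^2 - 2*a*Pp)*l^2 + (F*(a-2*l) + 2*l*Pp*a)*a)*(a*H) ≤ 0 :=
        mul_nonpos_of_nonpos_of_nonneg h2 (mul_nonneg ha.le hH)
      nlinarith [mul_pos hl hl]
  have e : a * (F*(H + E - 2*l*E/a) + 2*l*Pp*E - (2*M1*a^2*H + 2*a*Pp*H))
      = a*(F - 2*M1*a^2 - 2*a*Pp)*H + (F*(a-2*l) + 2*l*Pp*a)*E := by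
    field_simp
    ring
  nlinarith [key, e, ha]

section Descent
variable (S : AdaBB n) (xs : EuclideanSpace ℝ (Fin n))

set_option maxHeartbeats 1000000 in
lemma descent (hxs : ∀ y, S.f xs ≤ S.f y) (j : ℕ) :
    S.Upsilon xs (j+2) ≤ S.Upsilon xs (j+1) := by
  have ha := S.alpha_pos j
  have hb := S.alpha_pos (j+1)
  have hl := S.hlampos j
  set a := S.α j with hadef
  set b := S.α (j+1) with hbdef
  set l := S.lam (j+1) with hldef
  set g0 := S.f' (S.x j) with hg0def
  set g1 := S.f' (S.x (j+1)) with hg1def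
  have hstep1 : S.x (j+1) - S.x j = -(a • g0) := by rw [S.step_eq j]; abel
  have hstep2 : S.x (j+2) - S.x (j+1) = -(b • g1) := by rw [S.hstep j]; abel
  have hEpos : (0:ℝ) < ‖g1 - g0‖^2 := by
    have hne : g1 - g0 ≠ 0 := sub_ne_zero.mpr (S.hne j)
    have := norm_pos_iff.mpr hne
    positivity
  have hlamE : ⟪g1 - g0, S.x (j+1) - S.x j⟫ = l * ‖g1 - g0‖^2 := by
    rw [hldef, S.hlam j, div_mul_cancel₀ _ (ne_of_gt hEpos)]
  have hinner01 : ⟪g1 - g0, g0⟫ = -(l * ‖g1-g0‖^2) / a := by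
    rw [hstep1, inner_neg_right, real_inner_smul_right] at hlamE
    rw [eq_div_iff (ne_of_gt ha)]
    linarith
  have hinnerG : ⟪g1, g0⟫ = ‖g0‖^2 - l * ‖g1-g0‖^2 / a := by
    have h1 : ⟪g1 - g0, g0⟫ = ⟪g1, g0⟫ - ⟪g0, g0⟫ := inner_sub_left _ _ _
    rw [hinner01, real_inner_self_eq_norm_sq] at h1
    field_simp at h1 ⊢
    linarith
  have hG : ‖g1‖^2 = ‖g0‖^2 + ‖g1-g0‖^2 - 2*l*‖g1-g0‖^2/a := by
    have h1 : g1 = g0 + (g1 - g0) := by abel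
    calc ‖g1‖^2 = ‖g0 + (g1 - g0)‖^2 := by rw [← h1]
      _ = ‖g0‖^2 + 2*⟪g0, g1 - g0⟫ + ‖g1-g0‖^2 := norm_add_sq_real _ _
      _ = ‖g0‖^2 + ‖g1-g0‖^2 - 2*l*‖g1-g0‖^2/a := by
          rw [real_inner_comm, hinner01]
          field_simp
          ring
  have hCS : l^2 * ‖g1-g0‖^2 ≤ a^2 * ‖g0‖^2 := by
    have hcs := real_inner_mul_inner_self_le (g1 - g0) g0
    rw [hinner01, real_inner_self_eq_norm_sq, real_inner_self_eq_norm_sq] at hcs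
    have h2 : (l * ‖g1-g0‖^2)^2 / a^2 ≤ ‖g1-g0‖^2 * ‖g0‖^2 := by
      calc (l * ‖g1-g0‖^2)^2 / a^2 = -(l * ‖g1-g0‖^2)/a * (-(l * ‖g1-g0‖^2)/a) := by
            field_simp
        _ ≤ ‖g1-g0‖^2 * ‖g0‖^2 := hcs
    rw [div_le_iff₀ (by positivity)] at h2
    nlinarith [hEpos]
  have hHpos : (0:ℝ) < ‖g0‖^2 := by nlinarith [mul_pos (mul_pos hl hl) hEpos, sq_nonneg a]
  -- convexity
  have cv1 : S.f (S.x (j+1)) - S.f xs ≤ ⟪g1, S.x (j+1) - xs⟫ := by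
    have h1 := S.grad_ineq (S.x (j+1)) xs
    rw [show xs - S.x (j+1) = -(S.x (j+1) - xs) by abel, inner_neg_right] at h1
    linarith
  have cv2 : S.f (S.x (j+1)) - S.f (S.x j) ≤ -(a*‖g0‖^2 - l*‖g1-g0‖^2) := by
    have h1 := S.grad_ineq (S.x (j+1)) (S.x j)
    have h2 : S.x j - S.x (j+1) = a • g0 := by rw [S.step_eq j]; abel
    rw [h2, real_inner_smul_right, hinnerG] at h1
    have : a * (‖g0‖^2 - l * ‖g1-g0‖^2 / a) = a*‖g0‖^2 - l*‖g1-g0‖^2 := by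
      field_simp
    linarith [this]
  -- norms
  have nd1 : ‖S.x (j+1) - S.x j‖^2 = a^2*‖g0‖^2 := by
    rw [hstep1, norm_neg, norm_smul, Real.norm_eq_abs, mul_pow, sq_abs]
  have nd2 : ‖S.x (j+2) - S.x (j+1)‖^2 = b^2*‖g1‖^2 := by
    rw [hstep2, norm_neg, norm_smul, Real.norm_eq_abs, mul_pow, sq_abs]
  have n2 : ‖S.x (j+2) - xs‖^2
      = ‖S.x (j+1) - xs‖^2 - 2*b*⟪g1, S.x (j+1) - xs⟫ + b^2*‖g1‖^2 := by
    have h1 : S.x (j+2) - xs = (S.x (j+1) - xs) - b • g1 := by rw [S.hstep j]; abel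
    rw [h1, norm_sub_sq_real, real_inner_smul_right, norm_smul, Real.norm_eq_abs,
      mul_pow, sq_abs, real_inner_comm]
    ring
  -- the key inequality
  have hF0 : 0 ≤ 1 + 2*S.M (j+2) := by linarith [S.M_succ_nonneg (j+1)]
  have hF2 : b^2*(1 + 2*S.M (j+2)) ≤ 2*b^2 := by
    have := S.M_succ_le_half (j+1)
    nlinarith [sq_nonneg b]
  have hmain : b^2*(1 + 2*S.M (j+2))*‖g1‖^2 + 2*l*(S.P (j+1))*‖g1-g0‖^2
      ≤ 2*(S.M (j+1))*a^2*‖g0‖^2 + 2*a*(S.P (j+1))*‖g0‖^2 := by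
    rw [hG]
    rcases le_or_gt a l with h | h
    · have hM : S.M (j+1) = 0 := S.M_succ1 j h
      have hP : S.P (j+1) = b^2/a := by rw [S.P_succ j, S.Paux_succ1 j h]
      rw [hM, hP]
      apply keyD ha hl hHpos.le hEpos.le hCS
      · have e : 2*0*a^2 + 2*a*(b^2/a) = 2*b^2 := by field_simp; ring
        rw [e]; exact hF2
      · have e : 2*0*a^2*l^2 + 2*a*(b^2/a)*l^2 - 2*a^2*(b^2/a)*l = 2*b^2*l*(l-a) := by
          field_simp; ring
        rw [e]
        have h1 : (a-l)^2 ≤ l*(l-a) := by nlinarith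
        calc b^2*(1 + 2*S.M (j+2))*(a-l)^2 ≤ 2*b^2*((a-l)^2) :=
              mul_le_mul_of_nonneg_right hF2 (sq_nonneg _)
          _ ≤ 2*b^2*(l*(l-a)) := mul_le_mul_of_nonneg_left h1 (by positivity)
          _ = 2*b^2*l*(l-a) := by ring
    rcases le_or_gt l (a/2) with h2 | h2
    · have hM : S.M (j+1) = b^2/l^2 - b^2/(a*l) := S.M_succ3 j h2
      have hP : S.P (j+1) = b^2/a := by rw [S.P_succ j, S.Paux_succ3 j h2]
      have key := S.case3_sq j h2
      rw [hM, hP]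
      apply keyD ha hl hHpos.le hEpos.le hCS
      · have e : 2*(b^2/l^2 - b^2/(a*l))*a^2 + 2*a*(b^2/a)
            = 2*b^2*(a^2 - a*l + l^2)/l^2 := by field_simp
        rw [e, le_div_iff₀ (by positivity)]
        calc b^2*(1 + 2*S.M (j+2))*l^2 ≤ 2*b^2*l^2 :=
              mul_le_mul_of_nonneg_right hF2 (sq_nonneg _)
          _ ≤ 2*b^2*(a^2 - a*l + l^2) := by
              nlinarith [mul_nonneg (sq_nonneg b) (mul_nonneg ha.le (sub_nonneg.2 (by linarith : l ≤ a)))]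
      · have e : 2*(b^2/l^2 - b^2/(a*l))*a^2*l^2 + 2*a*(b^2/a)*l^2 - 2*a^2*(b^2/a)*l
            = 2*b^2*(a-l)^2 := by field_simp; ring
        rw [e]
        exact mul_le_mul_of_nonneg_right hF2 (sq_nonneg _)
    · have hM : S.M (j+1) = b^2/(l*a) - b^2/a^2 := S.M_succ2 j h2 h
      have hP : S.P (j+1) = 2*b^2/a - b^2/l := by rw [S.P_succ j, S.Paux_succ2 j h2 h]
      rw [hM, hP]
      apply keyD ha hl hHpos.le hEpos.le hCS
      · have e : 2*(b^2/(l*a) - b^2/a^2)*a^2 + 2*a*(2*b^2/a - b^2/l) = 2*b^2 := by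
          field_simp; ring
        rw [e]; exact hF2
      · have e : 2*(b^2/(l*a) - b^2/a^2)*a^2*l^2 + 2*a*(2*b^2/a - b^2/l)*l^2
            - 2*a^2*(2*b^2/a - b^2/l)*l = 2*b^2*(a-l)^2 := by field_simp; ring
        rw [e]
        exact mul_le_mul_of_nonneg_right hF2 (sq_nonneg _)
  -- assembling
  have hPp0 : 0 ≤ S.P (j+1) := S.P_succ_nonneg j
  have hf0 : S.f xs ≤ S.f (S.x j) := hxs _
  have hf1 : S.f xs ≤ S.f (S.x (j+1)) := hxs _
  have q1 : 2*b*(S.f (S.x (j+1)) - S.f xs) ≤ 2*b*⟪g1, S.x (j+1) - xs⟫ :=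
    mul_le_mul_of_nonneg_left cv1 (by positivity)
  have q2 : 2*(S.P (j+1))*(S.f (S.x (j+1)) - S.f xs)
      ≤ 2*(S.P (j+1))*((S.f (S.x j) - S.f xs) - (a*‖g0‖^2 - l*‖g1-g0‖^2)) :=
    mul_le_mul_of_nonneg_left (by linarith) (by positivity)
  have q3 : 2*(S.P (j+1))*(S.f (S.x j) - S.f xs)
      ≤ (2*a + 2*S.P j)*(S.f (S.x j) - S.f xs) :=
    mul_le_mul_of_nonneg_right (by linarith [S.w_nonneg j]) (by linarith)
  have uy2 : S.Upsilon xs (j+2) = ‖S.x (j+2) - xs‖^2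
      + 2*S.M (j+2)*‖S.x (j+2) - S.x (j+1)‖^2
      + (2*b + 2*S.P (j+1))*(S.f (S.x (j+1)) - S.f xs) := rfl
  have uy1 : S.Upsilon xs (j+1) = ‖S.x (j+1) - xs‖^2
      + 2*S.M (j+1)*‖S.x (j+1) - S.x j‖^2
      + (2*a + 2*S.P j)*(S.f (S.x j) - S.f xs) := rfl
  rw [uy2, uy1, n2, nd1, nd2]
  linarith [hmain, q1, q2, q3]

end Descent


section Ball
variable (S : AdaBB n) (xs : EuclideanSpace ℝ (Fin n))

lemma P_zero : S.P 0 = S.Paux 1 - S.α 0 := if_pos rfl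

lemma Upsilon_one_le (hxs : ∀ y, S.f xs ≤ S.f y) (R : ℝ)
    (hR2 : R ^ 2 = ‖S.x 0 - xs‖ ^ 2 + S.α 0 ^ 2 * (1 + 2 * S.M 1) * ‖S.f' (S.x 0)‖ ^ 2 +
      max (2 * S.P 1 - 2 * S.α 0) 0 * (S.f (S.x 0) - S.f xs)) :
    S.Upsilon xs 1 ≤ R ^ 2 := by
  have ha := S.hα0
  have uy : S.Upsilon xs 1 = ‖S.x 1 - xs‖^2 + 2*S.M 1*‖S.x 1 - S.x 0‖^2
      + (2*S.α 0 + 2*S.P 0)*(S.f (S.x 0) - S.f xs) := rfl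
  have hstep1 : S.x 1 - S.x 0 = -(S.α 0 • S.f' (S.x 0)) := by rw [S.hx1]; abel
  have nd1 : ‖S.x 1 - S.x 0‖^2 = S.α 0^2*‖S.f' (S.x 0)‖^2 := by
    rw [hstep1, norm_neg, norm_smul, Real.norm_eq_abs, mul_pow, sq_abs]
  have n1 : ‖S.x 1 - xs‖^2 = ‖S.x 0 - xs‖^2 - 2*S.α 0*⟪S.f' (S.x 0), S.x 0 - xs⟫
      + S.α 0^2*‖S.f' (S.x 0)‖^2 := by
    have h1 : S.x 1 - xs = (S.x 0 - xs) - S.α 0 • S.f' (S.x 0) := by rw [S.hx1]; abel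
    rw [h1, norm_sub_sq_real, real_inner_smul_right, norm_smul, Real.norm_eq_abs,
      mul_pow, sq_abs, real_inner_comm]
    ring
  have cv : S.f (S.x 0) - S.f xs ≤ ⟪S.f' (S.x 0), S.x 0 - xs⟫ := by
    have h1 := S.grad_ineq (S.x 0) xs
    rw [show xs - S.x 0 = -(S.x 0 - xs) by abel, inner_neg_right] at h1
    linarith
  have hf0 : 0 ≤ S.f (S.x 0) - S.f xs := by linarith [hxs (S.x 0)]
  have hP0 : 2*S.α 0 + 2*S.P 0 = 2*S.P 1 := by
    rw [S.P_zero, S.P_succ 0]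
    ring
  have q1 : 2*S.α 0*(S.f (S.x 0) - S.f xs) ≤ 2*S.α 0*⟪S.f' (S.x 0), S.x 0 - xs⟫ :=
    mul_le_mul_of_nonneg_left cv (by positivity)
  have q2 : (2*S.P 1 - 2*S.α 0)*(S.f (S.x 0) - S.f xs)
      ≤ max (2 * S.P 1 - 2 * S.α 0) 0 * (S.f (S.x 0) - S.f xs) :=
    mul_le_mul_of_nonneg_right (le_max_left _ _) hf0
  rw [uy, n1, nd1, hR2]
  nlinarith [q1, q2, hP0]

lemma Upsilon_ge (hxs : ∀ y, S.f xs ≤ S.f y) (k : ℕ) :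
    ‖S.x (k+1) - xs‖ ^ 2 ≤ S.Upsilon xs (k+1) := by
  have uy : S.Upsilon xs (k+1) = ‖S.x (k+1) - xs‖^2 + 2*S.M (k+1)*‖S.x (k+1) - S.x k‖^2
      + (2*S.α k + 2*S.P k)*(S.f (S.x k) - S.f xs) := rfl
  have h1 : 0 ≤ 2*S.M (k+1)*‖S.x (k+1) - S.x k‖^2 :=
    mul_nonneg (by linarith [S.M_succ_nonneg k]) (sq_nonneg _)
  have h2 : 0 ≤ (2*S.α k + 2*S.P k)*(S.f (S.x k) - S.f xs) := by
    apply mul_nonneg _ (by linarith [hxs (S.x k)])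
    cases k with
    | zero =>
      rw [S.P_zero]
      have := S.P_succ_nonneg 0
      rw [S.P_succ 0] at this
      linarith
    | succ j => linarith [S.P_succ_nonneg j, S.alpha_pos (j+1)]
  rw [uy]
  linarith

lemma ball (hxs : ∀ y, S.f xs ≤ S.f y) (R : ℝ) (hR0 : 0 ≤ R)
    (hR2 : R ^ 2 = ‖S.x 0 - xs‖ ^ 2 + S.α 0 ^ 2 * (1 + 2 * S.M 1) * ‖S.f' (S.x 0)‖ ^ 2 +
      max (2 * S.P 1 - 2 * S.α 0) 0 * (S.f (S.x 0) - S.f xs)) :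
    ∀ k, ‖S.x k - xs‖ ≤ R := by
  have sqle : ∀ v : EuclideanSpace ℝ (Fin n), ‖v‖^2 ≤ R^2 → ‖v‖ ≤ R := by
    intro v h
    have := Real.sqrt_le_sqrt h
    rwa [Real.sqrt_sq (norm_nonneg v), Real.sqrt_sq hR0] at this
  intro k
  cases k with
  | zero =>
    apply sqle
    rw [hR2]
    have h1 : 0 ≤ S.α 0 ^ 2 * (1 + 2 * S.M 1) * ‖S.f' (S.x 0)‖ ^ 2 := by
      apply mul_nonneg (mul_nonneg (sq_nonneg _) _) (sq_nonneg _)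
      linarith [S.M_succ_nonneg 0]
    have h2 : 0 ≤ max (2 * S.P 1 - 2 * S.α 0) 0 * (S.f (S.x 0) - S.f xs) :=
      mul_nonneg (le_max_right _ _) (by linarith [hxs (S.x 0)])
    linarith
  | succ j =>
    apply sqle
    have hd : S.Upsilon xs (j+1) ≤ S.Upsilon xs 1 := by
      induction j with
      | zero => exact le_refl _
      | succ i ih => exact le_trans (S.descent xs hxs i) ih
    calc ‖S.x (j+1) - xs‖^2 ≤ S.Upsilon xs (j+1) := S.Upsilon_ge xs hxs j
      _ ≤ S.Upsilon xs 1 := hd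
      _ ≤ R^2 := S.Upsilon_one_le xs hxs R hR2

lemma lam_ge (hxs : ∀ y, S.f xs ≤ S.f y) (R : ℝ) (hR0 : 0 ≤ R)
    (hR2 : R ^ 2 = ‖S.x 0 - xs‖ ^ 2 + S.α 0 ^ 2 * (1 + 2 * S.M 1) * ‖S.f' (S.x 0)‖ ^ 2 +
      max (2 * S.P 1 - 2 * S.α 0) 0 * (S.f (S.x 0) - S.f xs))
    (L : ℝ) (hL : 0 < L)
    (hcoco : ∀ x y : EuclideanSpace ℝ (Fin n), ‖x - xs‖ ≤ R → ‖y - xs‖ ≤ R →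
      (1 / L) * ‖S.f' x - S.f' y‖ ^ 2 ≤ ⟪S.f' x - S.f' y, x - y⟫) :
    ∀ k, 1 / L ≤ S.lam (k+1) := by
  intro k
  have hball := S.ball xs hxs R hR0 hR2
  have hco := hcoco (S.x (k+1)) (S.x k) (hball _) (hball _)
  have hEpos : (0:ℝ) < ‖S.f' (S.x (k+1)) - S.f' (S.x k)‖^2 := by
    have hne : S.f' (S.x (k+1)) - S.f' (S.x k) ≠ 0 := sub_ne_zero.mpr (S.hne k)
    have := norm_pos_iff.mpr hne
    positivity
  have hlamE : ⟪S.f' (S.x (k+1)) - S.f' (S.x k), S.x (k+1) - S.x k⟫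
      = S.lam (k+1) * ‖S.f' (S.x (k+1)) - S.f' (S.x k)‖^2 := by
    rw [S.hlam k, div_mul_cancel₀ _ (ne_of_gt hEpos)]
  rw [hlamE] at hco
  exact le_of_mul_le_mul_right hco hEpos

end Ball


section Sum
variable (S : AdaBB n)

lemma sqrt_two_facts : Real.sqrt 2 ^ 2 = 2 ∧ (1:ℝ) ≤ Real.sqrt 2 ∧ Real.sqrt 2 ≤ 2 := by
  have h1 : Real.sqrt 2 ^ 2 = 2 := Real.sq_sqrt (by norm_num)
  have h2 : (1:ℝ) ≤ Real.sqrt 2 := Real.le_sqrt_of_sq_le (by norm_num)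
  refine ⟨h1, h2, ?_⟩
  nlinarith [Real.sqrt_nonneg 2]

lemma base_bound
    (hθ0 : S.θ 0 = if Real.sqrt 2 * S.α 0 ≤ S.lam 1
      then S.lam 1 ^ 2 / (2 * S.α 0 ^ 2) - 1 else 0) :
    S.lam 1 ≤ Real.sqrt 2 * S.α 1 := by
  obtain ⟨hs2, hs1, _⟩ := sqrt_two_facts
  have ha0 := S.hα0
  have ha1 := S.alpha_pos 1
  have hl := S.hlampos 0
  rcases le_or_gt (Real.sqrt 2 * S.α 0) (S.lam 1) with h | h
  · rw [if_pos h] at hθ0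
    have h0 : S.α 0 ≤ S.lam 1 := by nlinarith
    obtain ⟨e1, _⟩ := S.case1_data 0 h0
    have h1p : 0 ≤ 1 + S.θ 0 := by
      rw [hθ0]
      have : 0 ≤ S.lam 1 ^ 2 / (2 * S.α 0 ^ 2) := by positivity
      linarith
    have hsq : (Real.sqrt 2 * S.α 1) ^ 2 = S.lam 1 ^ 2 := by
      rw [e1]
      rw [mul_pow, mul_pow, Real.sq_sqrt h1p, hs2, hθ0]
      field_simp
      ring
    by_contra hcon
    push_neg at hcon
    have : (Real.sqrt 2 * S.α 1) ^ 2 < S.lam 1 ^ 2 := by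
      apply pow_lt_pow_left₀ hcon (by positivity)
      norm_num
    linarith [hsq]
  · rw [if_neg (not_le.mpr h)] at hθ0
    rcases le_or_gt (S.α 0) (S.lam 1) with h1 | h1
    · obtain ⟨e1, _⟩ := S.case1_data 0 h1
      rw [e1, hθ0]
      norm_num
      nlinarith
    rcases le_or_gt (S.lam 1) (S.α 0 / 2) with h2 | h2
    · exact S.case3_lower 0 h2
    · have := S.case2_lower 0 h2 h1
      nlinarith

lemma alpha_ge (u : ℝ) (hu : 0 < u) (hlamu : ∀ k, u ≤ S.lam (k+1))
    (hb1 : S.lam 1 ≤ Real.sqrt 2 * S.α 1) :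
    ∀ k, 1 ≤ k → u ≤ Real.sqrt 2 * S.α k := by
  obtain ⟨hs2, hs1, _⟩ := sqrt_two_facts
  intro k hk
  induction k, hk using Nat.le_induction with
  | base => linarith [hlamu 0, hb1]
  | succ k hk ih =>
    have ha := S.alpha_pos k
    have hb := S.alpha_pos (k+1)
    have hl := S.hlampos k
    rcases le_or_gt (S.α k) (S.lam (k+1)) with h | h
    · obtain ⟨e1, _⟩ := S.case1_data k h
      have hst : (1:ℝ) ≤ Real.sqrt (1 + S.θ k) := one_le_sqrt_one_add (S.theta_nonneg k)
      have : S.α k ≤ S.α (k+1) := by rw [e1]; nlinarith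
      nlinarith
    rcases le_or_gt (S.lam (k+1)) (S.α k / 2) with h2 | h2
    · linarith [S.case3_lower k h2, hlamu k]
    · have := S.case2_lower k h2 h
      nlinarith [hlamu k]

lemma sum_invariant (u : ℝ) (hu : 0 < u) (hlamu : ∀ k, u ≤ S.lam (k+1))
    (hb1 : S.lam 1 ≤ Real.sqrt 2 * S.α 1) :
    ∀ k : ℕ, 1 ≤ k →
      ((k : ℝ) - 2 + Real.sqrt 2) * u + max (S.α k - u) 0
        + max (u - Real.sqrt (1 + S.θ k) * S.α k) 0 ≤ ∑ i ∈ Finset.Icc 1 k, S.α i := by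
  obtain ⟨hs2, hs1, hs22⟩ := sqrt_two_facts
  intro k hk
  induction k, hk using Nat.le_induction with
  | base =>
    rw [Finset.Icc_self, Finset.sum_singleton]
    have ha1 := S.alpha_pos 1
    have hsa : u ≤ Real.sqrt 2 * S.α 1 := by linarith [hlamu 0, hb1]
    have ht1 : (1:ℝ) ≤ Real.sqrt (1 + S.θ 1) := one_le_sqrt_one_add (S.theta_nonneg 1)
    have hgea : S.α 1 ≤ Real.sqrt (1 + S.θ 1) * S.α 1 := by nlinarith
    norm_num
    rcases le_total u (S.α 1) with hc | hc
    · rw [max_eq_left (by linarith), max_eq_right (by nlinarith)]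
      nlinarith
    · rw [max_eq_right (by linarith)]
      rcases le_total u (Real.sqrt (1 + S.θ 1) * S.α 1) with hc2 | hc2
      · rw [max_eq_right (by linarith)]
        nlinarith [mul_le_mul_of_nonneg_left hsa (by linarith : (0:ℝ) ≤ Real.sqrt 2 - 1)]
      · rw [max_eq_left (by linarith)]
        nlinarith [mul_le_mul_of_nonneg_left hsa (Real.sqrt_nonneg 2)]
  | succ k hk ih =>
    rw [Finset.sum_Icc_succ_top (by omega : 1 ≤ k + 1)]
    have ha := S.alpha_pos k
    have hb := S.alpha_pos (k+1)
    have hl := S.hlampos k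
    have hlu := hlamu k
    have hsa : u ≤ Real.sqrt 2 * S.α k := S.alpha_ge u hu hlamu hb1 k hk
    have htk : (1:ℝ) ≤ Real.sqrt (1 + S.θ k) := one_le_sqrt_one_add (S.theta_nonneg k)
    have htk1 : (1:ℝ) ≤ Real.sqrt (1 + S.θ (k+1)) := one_le_sqrt_one_add (S.theta_nonneg (k+1))
    have hgeb : S.α (k+1) ≤ Real.sqrt (1 + S.θ (k+1)) * S.α (k+1) := by nlinarith
    have hcast : ((k:ℝ) + 1 - 2 + Real.sqrt 2) = ((k:ℝ) - 2 + Real.sqrt 2) + 1 := by ring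
    push_cast
    rw [hcast]
    have key : max (S.α (k+1) - u) 0 + max (u - Real.sqrt (1 + S.θ (k+1)) * S.α (k+1)) 0
        ≤ max (S.α k - u) 0 + max (u - Real.sqrt (1 + S.θ k) * S.α k) 0
          + S.α (k+1) - u := by
      rcases le_or_gt (S.α k) (S.lam (k+1)) with h | h
      · -- case i
        obtain ⟨e1, e2⟩ := S.case1_data k h
        have hBA : S.α k ≤ S.α (k+1) := by rw [e1]; nlinarith
        have hT2 : Real.sqrt 2 ≤ Real.sqrt (1 + S.θ (k+1)) := by
          apply Real.sqrt_le_sqrt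
          rw [e2]
          linarith [one_le_sqrt_one_add (S.theta_nonneg k)]
        have hm2' : max (u - Real.sqrt (1 + S.θ (k+1)) * S.α (k+1)) 0 = 0 := by
          apply max_eq_right
          nlinarith
        have hm2 : u - S.α (k+1) ≤ max (u - Real.sqrt (1 + S.θ k) * S.α k) 0 := by
          rw [← e1]; exact le_max_left _ _
        rw [hm2']
        have q1 := le_max_right (S.α k - u) 0
        have q2 := le_max_right (u - Real.sqrt (1 + S.θ k) * S.α k) 0
        rcases le_total u (S.α (k+1)) with hc | hc
        · rw [max_eq_left (by linarith)]
          linarith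
        · rw [max_eq_right (by linarith)]
          linarith
      rcases le_or_gt (S.lam (k+1)) (S.α k / 2) with h2 | h2
      · -- case iii
        have hlow := S.case3_lower k h2
        have hA2 : 2 * u ≤ S.α k := by linarith
        have hm1 : max (S.α k - u) 0 = S.α k - u := max_eq_left (by linarith)
        have hm2' : max (u - Real.sqrt (1 + S.θ (k+1)) * S.α (k+1)) 0
            ≤ max (u - S.α (k+1)) 0 := by
          apply max_le _ (le_max_right _ _)
          apply le_trans _ (le_max_left _ _)
          linarith [hgeb]
        rw [hm1]
        have hmr := le_max_right (u - Real.sqrt (1 + S.θ k) * S.α k) 0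
        rcases le_total u (S.α (k+1)) with hc | hc
        · rw [max_eq_left (by linarith)]
          have : max (u - S.α (k+1)) 0 = 0 := max_eq_right (by linarith)
          rw [this] at hm2'
          linarith
        · rw [max_eq_right (by linarith)]
          have : max (u - S.α (k+1)) 0 = u - S.α (k+1) := max_eq_left (by linarith)
          rw [this] at hm2'
          have h2B : u ≤ 2 * S.α (k+1) := by nlinarith [hlow, hlu, hs22, hb]
          linarith
      · -- case ii
        have hlow := S.case2_lower k h2 h
        have hBu : u ≤ S.α (k+1) := by linarith
        have hm2' : max (u - Real.sqrt (1 + S.θ (k+1)) * S.α (k+1)) 0 = 0 := by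
          apply max_eq_right
          linarith [hgeb]
        rw [hm2', max_eq_left (by linarith)]
        have q1 := le_max_right (S.α k - u) 0
        have q2 := le_max_right (u - Real.sqrt (1 + S.θ k) * S.α k) 0
        linarith
    linarith [ih]

end Sum

end AdaBB

end
open scoped RealInnerProductSpace in
/-- Theorem 4.6: improved lower bound on the sum of AdaBB stepsizes.  With the initial
ratio `θ_0` chosen adaptively, `Σ_{i=1}^k α_i ≥ (k - 2 + √2)/L` for every `k ≥ 1`. -/
theorem adabb_sum_stepsizes_improved (n : ℕ) (S : AdaBB n)
    (xs : EuclideanSpace ℝ (Fin n)) (hxs : ∀ y, S.f xs ≤ S.f y)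
    (R : ℝ) (hR0 : 0 ≤ R)
    (hR2 : R ^ 2 = ‖S.x 0 - xs‖ ^ 2 + S.α 0 ^ 2 * (1 + 2 * S.M 1) * ‖S.f' (S.x 0)‖ ^ 2 +
      max (2 * S.P 1 - 2 * S.α 0) 0 * (S.f (S.x 0) - S.f xs))
    (L : ℝ) (hL : 0 < L)
    (hcoco : ∀ x y : EuclideanSpace ℝ (Fin n), ‖x - xs‖ ≤ R → ‖y - xs‖ ≤ R →
      (1 / L) * ‖S.f' x - S.f' y‖ ^ 2 ≤ ⟪S.f' x - S.f' y, x - y⟫)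
    (hθ0 : S.θ 0 = if Real.sqrt 2 * S.α 0 ≤ S.lam 1
      then S.lam 1 ^ 2 / (2 * S.α 0 ^ 2) - 1 else 0) :
    ∀ k : ℕ, 1 ≤ k → ((k : ℝ) - 2 + Real.sqrt 2) / L ≤ ∑ i ∈ Finset.Icc 1 k, S.α i := by
  intro k hk
  have hu : (0:ℝ) < 1/L := by positivity
  have hlamu := S.lam_ge xs hxs R hR0 hR2 L hL hcoco
  have hb1 := S.base_bound hθ0
  have inv := S.sum_invariant (1/L) hu hlamu hb1 k hk
  have q1 := le_max_right (S.α k - 1/L) 0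
  have q2 := le_max_right (1/L - Real.sqrt (1 + S.θ k) * S.α k) 0
  have e : ((k:ℝ) - 2 + Real.sqrt 2)/L = ((k:ℝ) - 2 + Real.sqrt 2)*(1/L) := by ring
  rw [e]
  linarith [inv, q1, q2]
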